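/- For every β ∈ (0, 1/2) and every x ≥ 0 with |x−1| ≥ β one has |x−1| ≤ (4/β)·ℓ(x). -/

import Mathlib

/-- `ℓ(r) = r log r - r + 1` (with `ℓ(0) = 1`, which holds since `Real.log 0 = 0`). -/
noncomputable def ell (r : ℝ) : ℝ := r * Real.log r - r + 1

lemma ell_continuous : Continuous ell := by
  unfold ell
  exact (Real.continuous_mul_log.sub continuous_id).add continuous_const

lemma hasDerivAt_h {x : ℝ} (hx : x ≠ 0) :
    HasDerivAt (fun y => ell y - (y - 1) ^ 2 / 4) (Real.log x - (x - 1) / 2) x := by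
  have h1 : HasDerivAt (fun y : ℝ => y * Real.log y) (Real.log x + 1) x :=
    Real.hasDerivAt_mul_log hx
  have h2 : HasDerivAt (fun y : ℝ => (y - 1) ^ 2 / 4) ((x - 1) / 2) x := by
    have : HasDerivAt (fun y : ℝ => y - 1) 1 x := (hasDerivAt_id x).sub_const 1
    have := (this.pow 2).div_const 4
    exact this.congr_deriv (by ring)
  have h3 : HasDerivAt ell (Real.log x + 1 - 1) x := by
    unfold ell
    exact (h1.sub (hasDerivAt_id x)).add_const 1
  have := h3.sub h2
  exact this.congr_deriv (by ring)

lemma ell_ge_quarter_sq {x : ℝ} (hx0 : 0 ≤ x) (hx2 : x ≤ 2) :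
    (x - 1) ^ 2 / 4 ≤ ell x := by
  rcases eq_or_lt_of_le hx0 with h0 | hxpos
  · simp [ell, ← h0]; norm_num
  set h : ℝ → ℝ := fun y => ell y - (y - 1) ^ 2 / 4 with hh
  have hcont : Continuous h := by
    exact ell_continuous.sub (((continuous_id.sub continuous_const).pow 2).div_const 4)
  have h1 : h 1 = 0 := by simp [hh, ell]
  have key : 0 ≤ h x := by
    rcases le_total x 1 with hle | hge
    · -- antitone on [x, 1]
      have hanti : AntitoneOn h (Set.Icc x 1) := by
        apply antitoneOn_of_deriv_nonpos (convex_Icc x 1) hcont.continuousOn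
        · intro y hy
          rw [interior_Icc] at hy
          exact (hasDerivAt_h (ne_of_gt (hxpos.trans hy.1))).differentiableAt.differentiableWithinAt
        · intro y hy
          rw [interior_Icc] at hy
          rw [(hasDerivAt_h (ne_of_gt (hxpos.trans hy.1))).deriv]
          have hlog : Real.log y ≤ y - 1 := Real.log_le_sub_one_of_pos (hxpos.trans hy.1)
          nlinarith [hy.2]
      have := hanti (Set.left_mem_Icc.2 hle) (Set.right_mem_Icc.2 hle) hle
      rw [h1] at this; linarith
    · -- monotone on [1, x]
      have hmono : MonotoneOn h (Set.Icc 1 x) := by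
        apply monotoneOn_of_deriv_nonneg (convex_Icc 1 x) hcont.continuousOn
        · intro y hy
          rw [interior_Icc] at hy
          have : (0:ℝ) < y := lt_trans one_pos hy.1
          exact (hasDerivAt_h (ne_of_gt this)).differentiableAt.differentiableWithinAt
        · intro y hy
          rw [interior_Icc] at hy
          have hy0 : (0:ℝ) < y := lt_trans one_pos hy.1
          rw [(hasDerivAt_h (ne_of_gt hy0)).deriv]
          have hlog : 1 - y⁻¹ ≤ Real.log y := Real.one_sub_inv_le_log_of_pos hy0
          have hy2 : y ≤ 2 := le_of_lt (lt_of_lt_of_le hy.2 hx2)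
          have h1y : (1:ℝ) ≤ y := le_of_lt hy.1
          -- log y ≥ 1 - 1/y = (y-1)/y ≥ (y-1)/2 since y ≤ 2
          have : (y - 1) / y ≤ Real.log y := by
            have heq : (y - 1) / y = 1 - y⁻¹ := by field_simp
            rw [heq]; exact hlog
          have h2 : (y - 1) / 2 ≤ (y - 1) / y := by
            apply div_le_div_of_nonneg_left (by linarith) hy0 hy2
          linarith
      have := hmono (Set.left_mem_Icc.2 hge) (Set.right_mem_Icc.2 hge) hge
      rw [h1] at this; linarith
  simp only [hh] at key; linarith

lemma hasDerivAt_g {x : ℝ} (hx : x ≠ 0) :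
    HasDerivAt (fun y => ell y - (y - 1) / 8) (Real.log x - 1 / 8) x := by
  have h1 : HasDerivAt (fun y : ℝ => y * Real.log y) (Real.log x + 1) x :=
    Real.hasDerivAt_mul_log hx
  have h3 : HasDerivAt ell (Real.log x + 1 - 1) x := by
    unfold ell
    exact (h1.sub (hasDerivAt_id x)).add_const 1
  have h2 : HasDerivAt (fun y : ℝ => (y - 1) / 8) (1 / 8) x := by
    have : HasDerivAt (fun y : ℝ => y - 1) 1 x := (hasDerivAt_id x).sub_const 1
    have := this.div_const 8
    convert this using 1
  have := h3.sub h2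
  exact this.congr_deriv (by ring)

lemma ell_ge_lin {x : ℝ} (hx2 : 2 ≤ x) : (x - 1) / 8 ≤ ell x := by
  set g : ℝ → ℝ := fun y => ell y - (y - 1) / 8 with hg
  have hcont : Continuous g :=
    ell_continuous.sub ((continuous_id.sub continuous_const).div_const 8)
  have hlog2 : (0.6931471803 : ℝ) < Real.log 2 := Real.log_two_gt_d9
  have hg2 : 0 < g 2 := by
    simp only [hg, ell]
    nlinarith
  have hmono : MonotoneOn g (Set.Icc 2 x) := by
    apply monotoneOn_of_deriv_nonneg (convex_Icc 2 x) hcont.continuousOn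
    · intro y hy
      rw [interior_Icc] at hy
      have : (0:ℝ) < y := by linarith [hy.1]
      exact (hasDerivAt_g (ne_of_gt this)).differentiableAt.differentiableWithinAt
    · intro y hy
      rw [interior_Icc] at hy
      have hy0 : (0:ℝ) < y := by linarith [hy.1]
      rw [(hasDerivAt_g (ne_of_gt hy0)).deriv]
      have : Real.log 2 ≤ Real.log y := Real.log_le_log (by norm_num) (le_of_lt hy.1)
      linarith
  have := hmono (Set.left_mem_Icc.2 hx2) (Set.right_mem_Icc.2 hx2) hx2
  have : 0 < g x := lt_of_lt_of_le hg2 this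
  simp only [hg] at this; linarith

/-- For every `β ∈ (0,1/2)` and every `x ≥ 0` with `|x−1| ≥ β` one has
`|x−1| ≤ (4/β)·ℓ(x)`. -/
theorem stmt2 :
    ∀ β : ℝ, 0 < β → β < 1/2 →
      ∀ x : ℝ, 0 ≤ x → β ≤ |x - 1| → |x - 1| ≤ (4 / β) * ell x := by
  intro β hβ0 hβ2 x hx0 hβx
  rcases le_total x 2 with hx2 | hx2
  · have hq := ell_ge_quarter_sq hx0 hx2
    have habs : |x - 1| ^ 2 = (x - 1) ^ 2 := sq_abs _
    have hβabs : β * |x - 1| ≤ (x - 1) ^ 2 := by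
      rw [← habs]
      have := mul_le_mul_of_nonneg_right hβx (abs_nonneg (x - 1))
      nlinarith [abs_nonneg (x - 1)]
    rw [div_mul_eq_mul_div, le_div_iff₀ hβ0]
    nlinarith
  · have hl := ell_ge_lin hx2
    have habs : |x - 1| = x - 1 := abs_of_nonneg (by linarith)
    rw [habs]
    rw [div_mul_eq_mul_div, le_div_iff₀ hβ0]
    nlinarith
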